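/- arXiv:2410.13476 — 2 statements merged into one kernel-verified Lean document; each statement's English description precedes it below -/
import Mathlib

section
/- Let α : ℝ → ℝ² be a regular C³ plane curve on an open interval I with signed curvature K, let f : I → ℝ be of class C², and define γ : I → ℝ³ by γ(t) = (α₁(t), α₂(t), f(t)). Denote by ι : ℝ² → ℝ³ the embedding ι(p₁,p₂) = (p₁,p₂,0) and e₃ = (0,0,1). Then for every t ∈ I, the cross product of the first two derivatives of γ satisfies γ'(t) × γ''(t) = ṡ(t)³ K(t) · e₃ − ι( J( f''(t)·α'(t) − f'(t)·α''(t) ) ), where ṡ(t) = ‖α'(t)‖. -/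
open scoped RealInnerProductSpace

noncomputable section

/-- The Euclidean plane `ℝ²`. -/
abbrev E2 := EuclideanSpace ℝ (Fin 2)
/-- Euclidean 3-space `ℝ³`. -/
abbrev E3 := EuclideanSpace ℝ (Fin 3)

/-- The point `(a, b)` of `ℝ²`. -/
def mk2 (a b : ℝ) : E2 := (WithLp.equiv 2 (Fin 2 → ℝ)).symm ![a, b]
/-- The point `(a, b, c)` of `ℝ³`. -/
def mk3 (a b c : ℝ) : E3 := (WithLp.equiv 2 (Fin 3 → ℝ)).symm ![a, b, c]

/-- The complex structure `J(p₁, p₂) = (-p₂, p₁)`, rotation by `π/2` counterclockwise. -/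
def Jc (v : E2) : E2 := mk2 (-(v 1)) (v 0)
/-- The embedding `ι : ℝ² → ℝ³`, `ι(p₁, p₂) = (p₁, p₂, 0)`. -/
def emb (v : E2) : E3 := mk3 (v 0) (v 1) 0
/-- The unit vector `e₃ = (0, 0, 1)`. -/
def e₃ : E3 := mk3 0 0 1
/-- The cross product in `ℝ³`. -/
def cross3 (u v : E3) : E3 :=
  mk3 (u 1 * v 2 - u 2 * v 1) (u 2 * v 0 - u 0 * v 2) (u 0 * v 1 - u 1 * v 0)

lemma hasDerivAt_mk3 {g₀ g₁ g₂ : ℝ → ℝ} {d₀ d₁ d₂ : ℝ} {t : ℝ}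
    (h₀ : HasDerivAt g₀ d₀ t) (h₁ : HasDerivAt g₁ d₁ t) (h₂ : HasDerivAt g₂ d₂ t) :
    HasDerivAt (fun s => mk3 (g₀ s) (g₁ s) (g₂ s)) (mk3 d₀ d₁ d₂) t := by
  have hp : HasDerivAt (fun s => (![g₀ s, g₁ s, g₂ s] : Fin 3 → ℝ)) ![d₀, d₁, d₂] t := by
    rw [hasDerivAt_pi]
    intro i
    fin_cases i <;> [exact h₀; exact h₁; exact h₂]
  exact ((PiLp.continuousLinearEquiv 2 ℝ (fun _ : Fin 3 => ℝ)).symm :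
      (Fin 3 → ℝ) →L[ℝ] E3).hasFDerivAt.comp_hasDerivAt t hp

lemma hasDerivAt_proj2 {α : ℝ → E2} {t : ℝ} (h : DifferentiableAt ℝ α t) (i : Fin 2) :
    HasDerivAt (fun s => α s i) (deriv α t i) t := by
  have := (EuclideanSpace.proj (𝕜 := ℝ) i).hasFDerivAt.comp_hasDerivAt t h.hasDerivAt
  exact this

/-- For a regular `C³` plane curve `α` with signed curvature `K` and a `C²`
function `f`, the cylindrical curve `γ(t) = (α₁(t), α₂(t), f(t))` satisfies
`γ' × γ'' = ṡ³K·e₃ − ι(J(f''·α' − f'·α''))` where `ṡ = ‖α'‖`. -/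
theorem cylindrical_curve_cross_product
    (I : Set ℝ) (hIopen : IsOpen I) (hIconn : I.OrdConnected)
    (α : ℝ → E2) (f : ℝ → ℝ) (γ : ℝ → E3) (K : ℝ → ℝ)
    (hα : ContDiffOn ℝ 3 α I) (hreg : ∀ t ∈ I, deriv α t ≠ 0)
    (hK : ∀ t ∈ I, K t = ⟪deriv (deriv α) t, Jc (deriv α t)⟫ / ‖deriv α t‖ ^ 3)
    (hf : ContDiffOn ℝ 2 f I)
    (hγ : ∀ t, γ t = mk3 (α t 0) (α t 1) (f t)) :
    ∀ t ∈ I,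
      cross3 (deriv γ t) (deriv (deriv γ) t) =
        (‖deriv α t‖ ^ 3 * K t) • e₃ -
          emb (Jc (deriv (deriv f) t • deriv α t - deriv f t • deriv (deriv α) t)) := by
  intro t ht
  have hmem : I ∈ nhds t := hIopen.mem_nhds ht
  have hαd : ∀ s ∈ I, DifferentiableAt ℝ α s := fun s hs =>
    (hα.differentiableOn (by norm_num)).differentiableAt (hIopen.mem_nhds hs)
  have hα' : ContDiffOn ℝ 2 (deriv α) I := hα.deriv_of_isOpen hIopen (by norm_num)
  have hα'd : DifferentiableAt ℝ (deriv α) t :=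
    (hα'.differentiableOn (by norm_num)).differentiableAt hmem
  have hfd : ∀ s ∈ I, DifferentiableAt ℝ f s := fun s hs =>
    (hf.differentiableOn (by norm_num)).differentiableAt (hIopen.mem_nhds hs)
  have hf' : ContDiffOn ℝ 1 (deriv f) I := hf.deriv_of_isOpen hIopen (by norm_num)
  have hf'd : DifferentiableAt ℝ (deriv f) t :=
    (hf'.differentiableOn (by norm_num)).differentiableAt hmem
  have hγfun : γ = fun s => mk3 (α s 0) (α s 1) (f s) := funext hγ
  have hγ' : ∀ s ∈ I, deriv γ s = mk3 (deriv α s 0) (deriv α s 1) (deriv f s) := by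
    intro s hs
    rw [hγfun]
    exact (hasDerivAt_mk3 (hasDerivAt_proj2 (hαd s hs) 0) (hasDerivAt_proj2 (hαd s hs) 1)
      (hfd s hs).hasDerivAt).deriv
  have hγ'' : deriv (deriv γ) t =
      mk3 (deriv (deriv α) t 0) (deriv (deriv α) t 1) (deriv (deriv f) t) := by
    have heq : deriv γ =ᶠ[nhds t]
        fun s => mk3 (deriv α s 0) (deriv α s 1) (deriv f s) :=
      Filter.eventuallyEq_of_mem hmem hγ'
    rw [heq.deriv_eq]
    exact (hasDerivAt_mk3 (hasDerivAt_proj2 hα'd 0) (hasDerivAt_proj2 hα'd 1)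
      hf'd.hasDerivAt).deriv
  have hK3 : ‖deriv α t‖ ^ 3 * K t = ⟪deriv (deriv α) t, Jc (deriv α t)⟫ := by
    rw [hK t ht]
    have hn : ‖deriv α t‖ ≠ 0 := norm_ne_zero_iff.2 (hreg t ht)
    field_simp
  rw [hγ' t ht, hγ'', hK3]
  apply PiLp.ext
  intro i
  fin_cases i <;>
    simp [cross3, mk3, mk2, Jc, emb, e₃, PiLp.inner_apply, Fin.sum_univ_two,
      WithLp.equiv_symm_apply, PiLp.toLp_apply, RCLike.inner_apply] <;> ring
end
end

section
/- Let α : ℝ → ℝ² be a regular C³ plane curve on an open interval I with signed curvature K(t) ≠ 0, let f : I → ℝ be of class C³, and define γ : I → ℝ³ by γ(t) = (α₁(t), α₂(t), f(t)). Assume the curvature κ and torsion τ of γ are nonzero at t. Then the second focal curvature c₂(t) = −κ'(t) / ( ‖γ'(t)‖ κ(t)² τ(t) ) of γ satisfies c₂ = [ 3(ṡ⁶K² + ‖f''α' − f'α''‖²)·(d/dt)(ṡ² + f'²) − (ṡ² + f'²)·(d/dt)(ṡ⁶K² + ‖f''α' − f'α''‖²) ] / [ 2√(ṡ⁶K² +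 ‖f''α' − f'α''‖²) · ( f'''·ṡ³K − ⟨J(f''·α' − f'·α''), α'''⟩ ) ], where ṡ(t) = ‖α'(t)‖. -/
open scoped RealInnerProductSpace

noncomputable section

@[simp] lemma mk2_zero (a b : ℝ) : mk2 a b 0 = a := rfl
@[simp] lemma mk2_one (a b : ℝ) : mk2 a b 1 = b := rfl
@[simp] lemma mk3_zero (a b c : ℝ) : mk3 a b c 0 = a := rfl
@[simp] lemma mk3_one (a b c : ℝ) : mk3 a b c 1 = b := rfl
@[simp] lemma mk3_two (a b c : ℝ) : mk3 a b c 2 = c := rfl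

@[simp] lemma emb_zero (c : E2) : emb c 0 = c 0 := rfl
@[simp] lemma emb_one (c : E2) : emb c 1 = c 1 := rfl
@[simp] lemma emb_two (c : E2) : emb c 2 = 0 := rfl
@[simp] lemma e3_zero : e₃ 0 = 0 := rfl
@[simp] lemma e3_one : e₃ 1 = 0 := rfl
@[simp] lemma e3_two : e₃ 2 = 1 := rfl
@[simp] lemma Jc_zero (v : E2) : Jc v 0 = -(v 1) := rfl
@[simp] lemma Jc_one (v : E2) : Jc v 1 = v 0 := rfl

lemma inner2 (x y : E2) : ⟪x, y⟫ = x 0 * y 0 + x 1 * y 1 := by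
  simp [PiLp.inner_apply, Fin.sum_univ_two, RCLike.inner_apply, mul_comm]
lemma inner3 (x y : E3) : ⟪x, y⟫ = x 0 * y 0 + x 1 * y 1 + x 2 * y 2 := by
  simp [PiLp.inner_apply, Fin.sum_univ_three, RCLike.inner_apply, mul_comm]
lemma normsq2 (x : E2) : ‖x‖ ^ 2 = x 0 ^ 2 + x 1 ^ 2 := by
  rw [← real_inner_self_eq_norm_sq, inner2]; ring
lemma normsq3 (x : E3) : ‖x‖ ^ 2 = x 0 ^ 2 + x 1 ^ 2 + x 2 ^ 2 := by
  rw [← real_inner_self_eq_norm_sq, inner3]; ring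

def embL : E2 →L[ℝ] E3 := LinearMap.toContinuousLinearMap
  { toFun := emb
    map_add' := by
      intro u v; ext i
      fin_cases i <;> simp [emb, PiLp.add_apply]
    map_smul' := by
      intro c v; ext i
      fin_cases i <;> simp [emb, PiLp.smul_apply, smul_eq_mul] }
@[simp] lemma embL_apply (v : E2) : embL v = emb v := rfl

def JcL : E2 →L[ℝ] E2 := LinearMap.toContinuousLinearMap
  { toFun := Jc
    map_add' := by
      intro u v; ext i
      fin_cases i <;> simp [Jc, PiLp.add_apply] <;> ring
    map_smul' := by
      intro c v; ext i
      fin_cases i <;> simp [Jc, PiLp.smul_apply, smul_eq_mul] }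
@[simp] lemma JcL_apply (v : E2) : JcL v = Jc v := rfl

@[simp] lemma dec0 (c : E2) (r : ℝ) : (embL c + r • e₃) 0 = c 0 := by
  simp [emb, e₃, PiLp.add_apply, PiLp.smul_apply]
@[simp] lemma dec1 (c : E2) (r : ℝ) : (embL c + r • e₃) 1 = c 1 := by
  simp [emb, e₃, PiLp.add_apply, PiLp.smul_apply]
@[simp] lemma dec2 (c : E2) (r : ℝ) : (embL c + r • e₃) 2 = r := by
  simp [emb, e₃, PiLp.add_apply, PiLp.smul_apply]

@[simp] lemma smulsub0 (p q : ℝ) (a b : E2) : (q • a - p • b) 0 = q * a 0 - p * b 0 := by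
  simp [PiLp.sub_apply, PiLp.smul_apply]
@[simp] lemma smulsub1 (p q : ℝ) (a b : E2) : (q • a - p • b) 1 = q * a 1 - p * b 1 := by
  simp [PiLp.sub_apply, PiLp.smul_apply]

lemma norm3 (v : E3) : ‖v‖ = Real.sqrt (v 0 ^ 2 + v 1 ^ 2 + v 2 ^ 2) := by
  rw [← normsq3, Real.sqrt_sq (norm_nonneg v)]

lemma cross_decomp (a b : E2) (p q : ℝ) :
    cross3 (embL a + p • e₃) (embL b + q • e₃) =
      mk3 ((q • a - p • b) 1) (-((q • a - p • b) 0)) ⟪b, Jc a⟫ := by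
  unfold cross3
  rw [inner2]
  ext i
  fin_cases i <;> simp <;> ring

lemma inner_mk3_dec (x y z : ℝ) (c : E2) (r : ℝ) :
    ⟪mk3 x y z, embL c + r • e₃⟫ = x * c 0 + y * c 1 + z * r := by
  rw [inner3]; simp


set_option maxHeartbeats 1600000


/-- For a regular `C³` plane curve `α` with nonvanishing signed curvature `K`
and a `C³` function `f`, the second focal curvature `c₂ = −κ'/(‖γ'‖κ²τ)` of the cylindrical
curve `γ(t) = (α₁(t), α₂(t), f(t))` satisfies
`c₂ = [3(ṡ⁶K² + ‖f''α' − f'α''‖²)(d/dt)(ṡ² + f'²) − (ṡ² + f'²)(d/dt)(ṡ⁶K² + ‖f''α' − f'α''‖²)] /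
      [2√(ṡ⁶K² + ‖f''α' − f'α''‖²)·(f'''ṡ³K − ⟨J(f''α' − f'α''), α'''⟩)]` where `ṡ = ‖α'‖`. -/
theorem cylindrical_curve_second_focal_curvature
    (I : Set ℝ) (hIopen : IsOpen I) (hIconn : I.OrdConnected)
    (α : ℝ → E2) (f : ℝ → ℝ) (γ : ℝ → E3) (K : ℝ → ℝ) (κ : ℝ → ℝ) (τ : ℝ → ℝ)
    (hα : ContDiffOn ℝ 3 α I) (hreg : ∀ t ∈ I, deriv α t ≠ 0)
    (hK : ∀ t ∈ I, K t = ⟪deriv (deriv α) t, Jc (deriv α t)⟫ / ‖deriv α t‖ ^ 3)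
    (hK0 : ∀ t ∈ I, K t ≠ 0)
    (hf : ContDiffOn ℝ 3 f I)
    (hγ : ∀ t, γ t = mk3 (α t 0) (α t 1) (f t))
    (hκ : ∀ u, κ u = ‖cross3 (deriv γ u) (deriv (deriv γ) u)‖ / ‖deriv γ u‖ ^ 3)
    (hτ : ∀ u, τ u =
      ⟪cross3 (deriv γ u) (deriv (deriv γ) u), deriv (deriv (deriv γ)) u⟫ /
        ‖cross3 (deriv γ u) (deriv (deriv γ) u)‖ ^ 2)
    (t : ℝ) (ht : t ∈ I) (hκ0 : κ t ≠ 0) (hτ0 : τ t ≠ 0) :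
    -deriv κ t / (‖deriv γ t‖ * κ t ^ 2 * τ t) =
      (3 * (‖deriv α t‖ ^ 6 * K t ^ 2 +
            ‖deriv (deriv f) t • deriv α t - deriv f t • deriv (deriv α) t‖ ^ 2) *
          deriv (fun u => ‖deriv α u‖ ^ 2 + deriv f u ^ 2) t -
        (‖deriv α t‖ ^ 2 + deriv f t ^ 2) *
          deriv (fun u => ‖deriv α u‖ ^ 6 * K u ^ 2 +
            ‖deriv (deriv f) u • deriv α u - deriv f u • deriv (deriv α) u‖ ^ 2) t) /
      (2 * Real.sqrt (‖deriv α t‖ ^ 6 * K t ^ 2 +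
            ‖deriv (deriv f) t • deriv α t - deriv f t • deriv (deriv α) t‖ ^ 2) *
        (deriv (deriv (deriv f)) t * ‖deriv α t‖ ^ 3 * K t -
          ⟪Jc (deriv (deriv f) t • deriv α t - deriv f t • deriv (deriv α) t),
            deriv (deriv (deriv α)) t⟫)) := by

  have hItn : I ∈ nhds t := hIopen.mem_nhds ht
  -- smoothness of derivatives
  have hsm1 : ContDiffOn ℝ 2 (deriv α) I := hα.deriv_of_isOpen hIopen (by norm_num)
  have hsm2 : ContDiffOn ℝ 1 (deriv (deriv α)) I := hsm1.deriv_of_isOpen hIopen (by norm_num)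
  have hfm1 : ContDiffOn ℝ 2 (deriv f) I := hf.deriv_of_isOpen hIopen (by norm_num)
  have hfm2 : ContDiffOn ℝ 1 (deriv (deriv f)) I := hfm1.deriv_of_isOpen hIopen (by norm_num)
  have dα1 : ∀ u ∈ I, HasDerivAt α (deriv α u) u := fun u hu =>
    ((hα.contDiffAt (hIopen.mem_nhds hu)).differentiableAt (by norm_num)).hasDerivAt
  have dα2 : ∀ u ∈ I, HasDerivAt (deriv α) (deriv (deriv α) u) u := fun u hu =>
    ((hsm1.contDiffAt (hIopen.mem_nhds hu)).differentiableAt (by norm_num)).hasDerivAt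
  have dα3 : ∀ u ∈ I, HasDerivAt (deriv (deriv α)) (deriv (deriv (deriv α)) u) u := fun u hu =>
    ((hsm2.contDiffAt (hIopen.mem_nhds hu)).differentiableAt (by norm_num)).hasDerivAt
  have df1 : ∀ u ∈ I, HasDerivAt f (deriv f u) u := fun u hu =>
    ((hf.contDiffAt (hIopen.mem_nhds hu)).differentiableAt (by norm_num)).hasDerivAt
  have df2 : ∀ u ∈ I, HasDerivAt (deriv f) (deriv (deriv f) u) u := fun u hu =>
    ((hfm1.contDiffAt (hIopen.mem_nhds hu)).differentiableAt (by norm_num)).hasDerivAt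
  have df3 : ∀ u ∈ I, HasDerivAt (deriv (deriv f)) (deriv (deriv (deriv f)) u) u := fun u hu =>
    ((hfm2.contDiffAt (hIopen.mem_nhds hu)).differentiableAt (by norm_num)).hasDerivAt
  -- structure of γ
  have hγfun : γ = fun u => embL (α u) + f u • e₃ := by
    funext u
    rw [hγ u]
    ext i
    fin_cases i <;> simp
  have hg1 : ∀ u ∈ I, HasDerivAt γ (embL (deriv α u) + deriv f u • e₃) u := by
    intro u hu
    rw [hγfun]
    exact (embL.hasFDerivAt.comp_hasDerivAt u (dα1 u hu)).add ((df1 u hu).smul_const e₃)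
  have dg1 : ∀ u ∈ I, deriv γ u = embL (deriv α u) + deriv f u • e₃ :=
    fun u hu => (hg1 u hu).deriv
  have hg2 : ∀ u ∈ I, HasDerivAt (deriv γ)
      (embL (deriv (deriv α) u) + deriv (deriv f) u • e₃) u := by
    intro u hu
    have h1 : HasDerivAt (fun v => embL (deriv α v) + deriv f v • e₃)
        (embL (deriv (deriv α) u) + deriv (deriv f) u • e₃) u :=
      (embL.hasFDerivAt.comp_hasDerivAt u (dα2 u hu)).add ((df2 u hu).smul_const e₃)
    exact h1.congr_of_eventuallyEq (Filter.eventuallyEq_of_mem (hIopen.mem_nhds hu) dg1)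
  have dg2 : ∀ u ∈ I, deriv (deriv γ) u = embL (deriv (deriv α) u) + deriv (deriv f) u • e₃ :=
    fun u hu => (hg2 u hu).deriv
  have hg3 : HasDerivAt (deriv (deriv γ))
      (embL (deriv (deriv (deriv α)) t) + deriv (deriv (deriv f)) t • e₃) t := by
    have h1 : HasDerivAt (fun v => embL (deriv (deriv α) v) + deriv (deriv f) v • e₃)
        (embL (deriv (deriv (deriv α)) t) + deriv (deriv (deriv f)) t • e₃) t :=
      (embL.hasFDerivAt.comp_hasDerivAt t (dα3 t ht)).add ((df3 t ht).smul_const e₃)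
    exact h1.congr_of_eventuallyEq (Filter.eventuallyEq_of_mem hItn dg2)
  have dg3 : deriv (deriv (deriv γ)) t
      = embL (deriv (deriv (deriv α)) t) + deriv (deriv (deriv f)) t • e₃ := hg3.deriv
  -- cross product values
  have hcross : ∀ u ∈ I, cross3 (deriv γ u) (deriv (deriv γ) u) =
      mk3 ((deriv (deriv f) u • deriv α u - deriv f u • deriv (deriv α) u) 1)
        (-((deriv (deriv f) u • deriv α u - deriv f u • deriv (deriv α) u) 0))
        ⟪deriv (deriv α) u, Jc (deriv α u)⟫ := by
    intro u hu
    rw [dg1 u hu, dg2 u hu, cross_decomp]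
  -- norms
  have hcnorm : ∀ u ∈ I, ‖cross3 (deriv γ u) (deriv (deriv γ) u)‖ =
      Real.sqrt (⟪deriv (deriv f) u • deriv α u - deriv f u • deriv (deriv α) u,
                  deriv (deriv f) u • deriv α u - deriv f u • deriv (deriv α) u⟫ +
        ⟪deriv (deriv α) u, Jc (deriv α u)⟫ ^ 2) := by
    intro u hu
    rw [hcross u hu, norm3]
    congr 1
    simp [inner2, normsq2]
    ring
  have hγnorm : ∀ u ∈ I, ‖deriv γ u‖ =
      Real.sqrt (⟪deriv α u, deriv α u⟫ + deriv f u ^ 2) := by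
    intro u hu
    rw [dg1 u hu, norm3]
    congr 1
    simp [inner2, normsq2]
  -- kappa formula on I
  have hκval : ∀ u ∈ I, κ u =
      Real.sqrt (⟪deriv (deriv f) u • deriv α u - deriv f u • deriv (deriv α) u,
                  deriv (deriv f) u • deriv α u - deriv f u • deriv (deriv α) u⟫ +
        ⟪deriv (deriv α) u, Jc (deriv α u)⟫ ^ 2) /
      Real.sqrt (⟪deriv α u, deriv α u⟫ + deriv f u ^ 2) ^ 3 := by
    intro u hu
    rw [hκ u, hcnorm u hu, hγnorm u hu]
  -- derivatives of the building blocks at t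
  have hw : HasDerivAt
      (fun u => deriv (deriv f) u • deriv α u - deriv f u • deriv (deriv α) u)
      ((deriv (deriv f) t • deriv (deriv α) t + deriv (deriv (deriv f)) t • deriv α t)
        - (deriv f t • deriv (deriv (deriv α)) t + deriv (deriv f) t • deriv (deriv α) t)) t :=
    ((df3 t ht).smul (dα2 t ht)).sub ((df2 t ht).smul (dα3 t ht))
  have hJ : HasDerivAt (fun u => Jc (deriv α u)) (JcL (deriv (deriv α) t)) t := by
    have := JcL.hasFDerivAt.comp_hasDerivAt t (dα2 t ht)
    simpa [Function.comp_def] using this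
  have hip := (dα3 t ht).inner ℝ hJ
  have hA := (hw.inner ℝ hw).add (hip.pow 2)
  have hB := ((dα2 t ht).inner ℝ (dα2 t ht)).add ((df2 t ht).pow 2)
  -- positivity
  have hstn : (0:ℝ) < ‖deriv α t‖ := norm_pos_iff.mpr (hreg t ht)
  have hB0 : 0 < ⟪deriv α t, deriv α t⟫ + deriv f t ^ 2 := by
    rw [real_inner_self_eq_norm_sq]
    nlinarith [sq_nonneg (deriv f t)]
  have hip0 : ⟪deriv (deriv α) t, Jc (deriv α t)⟫ ≠ 0 := by
    intro h
    exact hK0 t ht (by rw [hK t ht, h, zero_div])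
  have hA0 : 0 < ⟪deriv (deriv f) t • deriv α t - deriv f t • deriv (deriv α) t,
      deriv (deriv f) t • deriv α t - deriv f t • deriv (deriv α) t⟫ +
      ⟪deriv (deriv α) t, Jc (deriv α t)⟫ ^ 2 := by
    have h1 : (0:ℝ) ≤ ⟪deriv (deriv f) t • deriv α t - deriv f t • deriv (deriv α) t,
        deriv (deriv f) t • deriv α t - deriv f t • deriv (deriv α) t⟫ := real_inner_self_nonneg
    have h2 : (0:ℝ) < ⟪deriv (deriv α) t, Jc (deriv α t)⟫ ^ 2 :=
      (sq_nonneg _).lt_of_ne (Ne.symm (pow_ne_zero 2 hip0))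
    linarith
  -- derivative of kappa
  have hκd := ((hA.sqrt hA0.ne').div ((hB.sqrt hB0.ne').pow 3)
      (pow_ne_zero 3 (Real.sqrt_ne_zero'.mpr hB0))).congr_of_eventuallyEq
      (Filter.eventuallyEq_of_mem hItn hκval)
  -- torsion value at t
  have hcr2 : ‖cross3 (deriv γ t) (deriv (deriv γ) t)‖ ^ 2 =
      ⟪deriv (deriv f) t • deriv α t - deriv f t • deriv (deriv α) t,
        deriv (deriv f) t • deriv α t - deriv f t • deriv (deriv α) t⟫ +
      ⟪deriv (deriv α) t, Jc (deriv α t)⟫ ^ 2 := by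
    rw [hcnorm t ht, Real.sq_sqrt hA0.le]
  have hτt : τ t = (deriv (deriv (deriv f)) t * ⟪deriv (deriv α) t, Jc (deriv α t)⟫ -
      ⟪Jc (deriv (deriv f) t • deriv α t - deriv f t • deriv (deriv α) t),
        deriv (deriv (deriv α)) t⟫) /
      (⟪deriv (deriv f) t • deriv α t - deriv f t • deriv (deriv α) t,
        deriv (deriv f) t • deriv α t - deriv f t • deriv (deriv α) t⟫ +
      ⟪deriv (deriv α) t, Jc (deriv α t)⟫ ^ 2) := by
    rw [hτ t, hcr2, hcross t ht, dg3, inner_mk3_dec]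
    congr 1
    rw [inner2]
    simp [inner2]
    ring
  have hD0 : (deriv (deriv (deriv f)) t * ⟪deriv (deriv α) t, Jc (deriv α t)⟫ -
      ⟪Jc (deriv (deriv f) t • deriv α t - deriv f t • deriv (deriv α) t),
        deriv (deriv (deriv α)) t⟫) ≠ 0 := by
    intro h
    exact hτ0 (by rw [hτt, h, zero_div])
  -- rewriting the right-hand side
  have hKA : ‖deriv α t‖ ^ 6 * K t ^ 2 +
      ‖deriv (deriv f) t • deriv α t - deriv f t • deriv (deriv α) t‖ ^ 2 =
      ⟪deriv (deriv f) t • deriv α t - deriv f t • deriv (deriv α) t,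
        deriv (deriv f) t • deriv α t - deriv f t • deriv (deriv α) t⟫ +
      ⟪deriv (deriv α) t, Jc (deriv α t)⟫ ^ 2 := by
    rw [hK t ht, real_inner_self_eq_norm_sq]
    field_simp
    ring
  have hDrw : deriv (deriv (deriv f)) t * ‖deriv α t‖ ^ 3 * K t =
      deriv (deriv (deriv f)) t * ⟪deriv (deriv α) t, Jc (deriv α t)⟫ := by
    rw [hK t ht]
    field_simp
  have hBfun : (fun u => ‖deriv α u‖ ^ 2 + deriv f u ^ 2) =
      (fun u => ⟪deriv α u, deriv α u⟫ + deriv f u ^ 2) := by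
    funext u
    rw [real_inner_self_eq_norm_sq]
  have hAev : (fun u => ‖deriv α u‖ ^ 6 * K u ^ 2 +
      ‖deriv (deriv f) u • deriv α u - deriv f u • deriv (deriv α) u‖ ^ 2) =ᶠ[nhds t]
      (fun u => ⟪deriv (deriv f) u • deriv α u - deriv f u • deriv (deriv α) u,
          deriv (deriv f) u • deriv α u - deriv f u • deriv (deriv α) u⟫ +
        ⟪deriv (deriv α) u, Jc (deriv α u)⟫ ^ 2) := by
    refine Filter.eventuallyEq_of_mem hItn (fun u hu => ?_)
    have hsu : ‖deriv α u‖ ≠ 0 := norm_ne_zero_iff.mpr (hreg u hu)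
    rw [hK u hu, real_inner_self_eq_norm_sq]
    field_simp
    ring
  have hAd := hAev.deriv_eq
  rw [hAd] at *
  -- assemble
  simp only [Pi.add_def, Pi.pow_def] at hA hB hκd
  rw [hκd.deriv, hγnorm t ht, hκval t ht, hτt, hKA, hBfun, hB.deriv, hA.deriv, hDrw]
  beta_reduce
  generalize hsA : Real.sqrt (⟪deriv (deriv f) t • deriv α t - deriv f t • deriv (deriv α) t,
      deriv (deriv f) t • deriv α t - deriv f t • deriv (deriv α) t⟫ +
      ⟪deriv (deriv α) t, Jc (deriv α t)⟫ ^ 2) = sA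
  generalize hsB : Real.sqrt (⟪deriv α t, deriv α t⟫ + deriv f t ^ 2) = sB
  have hsA0 : 0 < sA := hsA ▸ Real.sqrt_pos.mpr hA0
  have hsB0 : 0 < sB := hsB ▸ Real.sqrt_pos.mpr hB0
  have hsA2 : sA ^ 2 = ⟪deriv (deriv f) t • deriv α t - deriv f t • deriv (deriv α) t,
      deriv (deriv f) t • deriv α t - deriv f t • deriv (deriv α) t⟫ +
      ⟪deriv (deriv α) t, Jc (deriv α t)⟫ ^ 2 := by
    rw [← hsA]; exact Real.sq_sqrt hA0.le
  have hsB2 : sB ^ 2 = ⟪deriv α t, deriv α t⟫ + deriv f t ^ 2 := by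
    rw [← hsB]; exact Real.sq_sqrt hB0.le
  have hBt : ‖deriv α t‖ ^ 2 + deriv f t ^ 2 = sB ^ 2 := by
    rw [hsB2, real_inner_self_eq_norm_sq]
  rw [hBt, ← hsA2]
  generalize hx1 : ⟪deriv (deriv f) t • deriv α t - deriv f t • deriv (deriv α) t,
      deriv (deriv f) t • deriv (deriv α) t + deriv (deriv (deriv f)) t • deriv α t -
        (deriv f t • deriv (deriv (deriv α)) t + deriv (deriv f) t • deriv (deriv α) t)⟫ = x1
  generalize hx2 : ⟪deriv (deriv f) t • deriv (deriv α) t + deriv (deriv (deriv f)) t • deriv α t -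
        (deriv f t • deriv (deriv (deriv α)) t + deriv (deriv f) t • deriv (deriv α) t),
      deriv (deriv f) t • deriv α t - deriv f t • deriv (deriv α) t⟫ = x2
  generalize hu1 : ⟪deriv (deriv α) t, JcL (deriv (deriv α) t)⟫ = u1
  generalize hu2 : ⟪deriv (deriv (deriv α)) t, Jc (deriv α t)⟫ = u2
  generalize hm1 : ⟪deriv α t, deriv (deriv α) t⟫ = m1
  generalize hm2 : ⟪deriv (deriv α) t, deriv α t⟫ = m2
  generalize hdj : ⟪Jc (deriv (deriv f) t • deriv α t - deriv f t • deriv (deriv α) t),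
      deriv (deriv (deriv α)) t⟫ = dj at hD0 ⊢
  generalize hr : ⟪deriv (deriv α) t, Jc (deriv α t)⟫ = r at hD0 ⊢
  field_simp [hD0]
  ring
end
end
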